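/- Fix an integer K ≥ 1, an integer ℓ with 1 ≤ ℓ ≤ K, and a real γ > 0. Fix reals λ_1,…,λ_K > 0 and c_1,…,c_ℓ > 0, and set c_i = 0 for ℓ < i ≤ K. Fix sequences n_1,…,n_K : ℕ → ℕ with n_i(n)/n → λ_i as n → ∞. On a probability space, for each n let p_1^{(n)},…,p_K^{(n)} be random variables with values in (0,1) such that: (i) for each 1 ≤ i ≤ ℓ, −(2/n_i(n))·log p_i^{(n)} → c_i almost surely as n → ∞; (ii) for each ℓ < i ≤ K and every n, p_i^{(n)} is uniformly distributed on (0,1). Define the Pareto combination statistic T(u) = ∑_{i=1}^K u_i^{−1/γ} for u ∈ (0,1)^K, its null survival function H(t) = μ_K{u : T(u) ≥ t}, and the combined p-value q_n = H(T(p_1^{(n)},…,p_K^{(n)})). Then −(2/n)·log q_n → max_{1≤i≤ℓ} λ_i·c_i almost surely as n → ∞; in particular, when ℓ ≥ 2 the Pareto combination test is not asymptotically Bahadur optimal since max_{1≤i≤ℓ} λ_i c_i < ∑_{i=1}^ℓ λ_i c_i. -/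

import Mathlib

open MeasureTheory Filter Set ProbabilityTheory
open scoped ENNReal

lemma null_log_tendsto {Ω : Type*} [MeasurableSpace Ω] (μ : Measure Ω) [IsProbabilityMeasure μ]
    (X : ℕ → Ω → ℝ) (hmeas : ∀ n, Measurable (X n)) (hval : ∀ n ω, X n ω ∈ Ioo (0:ℝ) 1)
    (hmap : ∀ n, Measure.map (X n) μ = volume.restrict (Ioo (0:ℝ) 1)) :
    ∀ᵐ ω ∂μ, Tendsto (fun n : ℕ => -(2 / (n:ℝ)) * Real.log (X n ω)) atTop (nhds 0) := by
  have key : ∀ m : ℕ, ∀ᵐ ω ∂μ, ∀ᶠ n : ℕ in atTop,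
      ¬ (X n ω ≤ Real.exp (-((1/(m+1 : ℝ)) * n))) := by
    intro m
    set ε : ℝ := 1/(m+1 : ℝ) with hε
    have hεpos : 0 < ε := by positivity
    apply ae_eventually_notMem (s := fun n => {ω | X n ω ≤ Real.exp (-(ε * n))})
    have hb : ∀ n : ℕ, μ {ω | X n ω ≤ Real.exp (-(ε * n))}
        ≤ ENNReal.ofReal (Real.exp (-ε) ^ n) := by
      intro n
      have : {ω | X n ω ≤ Real.exp (-(ε * n))} = X n ⁻¹' (Iic (Real.exp (-(ε * n)))) := rfl
      rw [this, ← Measure.map_apply (hmeas n) measurableSet_Iic, hmap n,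
        Measure.restrict_apply measurableSet_Iic]
      calc volume (Iic (Real.exp (-(ε * n))) ∩ Ioo 0 1)
          ≤ volume (Ioc (0:ℝ) (Real.exp (-(ε * n)))) := by
            apply measure_mono; rintro x ⟨hx1, hx2, _⟩; exact ⟨hx2, hx1⟩
        _ = ENNReal.ofReal (Real.exp (-(ε * n))) := by simp [Real.volume_Ioc]
        _ = ENNReal.ofReal (Real.exp (-ε) ^ n) := by
            rw [← Real.exp_nat_mul]; ring_nf
    have hsum : Summable (fun n : ℕ => Real.exp (-ε) ^ n) :=
      summable_geometric_of_lt_one (le_of_lt (Real.exp_pos _))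
        (by rw [Real.exp_lt_one_iff]; linarith)
    have hle : (∑' n, μ {ω | X n ω ≤ Real.exp (-(ε * n))})
        ≤ ENNReal.ofReal (∑' n, Real.exp (-ε) ^ n) := by
      rw [ENNReal.ofReal_tsum_of_nonneg (fun n => by positivity) hsum]
      exact ENNReal.tsum_le_tsum hb
    exact ne_top_of_le_ne_top ENNReal.ofReal_ne_top hle
  rw [← ae_all_iff] at key
  filter_upwards [key] with ω hω
  rw [Metric.tendsto_atTop]
  intro δ hδ
  obtain ⟨m, hm⟩ := exists_nat_gt (2/δ)
  have hmδ : 2/(m+1 : ℝ) < δ := by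
    rw [div_lt_iff₀ (by positivity)]
    rw [div_lt_iff₀ hδ] at hm
    nlinarith [hδ]
  obtain ⟨N, hN⟩ := (hω m).exists_forall_of_atTop
  refine ⟨max N 1, fun n hn => ?_⟩
  have hn1 : 1 ≤ n := le_trans (le_max_right _ _) hn
  have hnN : N ≤ n := le_trans (le_max_left _ _) hn
  have hx := hval n ω
  have hlog : -((1/(m+1 : ℝ)) * n) < Real.log (X n ω) := by
    rw [← Real.exp_lt_exp, Real.exp_log hx.1]
    exact lt_of_not_ge (hN n hnN)
  have hlogneg : Real.log (X n ω) < 0 := Real.log_neg hx.1 hx.2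
  have hnpos : (0:ℝ) < n := by exact_mod_cast hn1
  have hval1 : -(2 / (n:ℝ)) * Real.log (X n ω) < δ := by
    have h1 : -(2 / (n:ℝ)) * Real.log (X n ω) < (2/(n:ℝ)) * ((1/(m+1:ℝ)) * n) := by
      have := mul_lt_mul_of_pos_left (neg_lt.mpr hlog) (show (0:ℝ) < 2/n by positivity)
      nlinarith
    have h2 : (2/(n:ℝ)) * ((1/(m+1:ℝ)) * n) = 2/(m+1:ℝ) := by field_simp
    linarith [h1, h2.symm ▸ h1]
  have hval0 : 0 ≤ -(2 / (n:ℝ)) * Real.log (X n ω) := by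
    have : 0 ≤ 2/(n:ℝ) := by positivity
    nlinarith
  rw [Real.dist_eq, abs_sub_comm, abs_of_nonpos (by linarith), neg_sub, sub_zero]
  linarith

lemma pareto_H_lb {K : ℕ} (hK : 1 ≤ K) {γ : ℝ} (hγ : 0 < γ) {t : ℝ} (ht : 1 ≤ t) :
    ENNReal.ofReal (t ^ (-γ)) ≤
      (Measure.pi fun _ : Fin K => volume.restrict (Icc (0:ℝ) 1))
        {u | t ≤ ∑ i : Fin K, (u i) ^ (-(1/γ))} := by
  have hK0 : 0 < K := hK
  have i0 : Fin K := ⟨0, hK0⟩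
  set a : ℝ := t ^ (-γ) with ha
  have ht0 : (0:ℝ) < t := lt_of_lt_of_le one_pos ht
  have ha0 : 0 < a := Real.rpow_pos_of_pos ht0 _
  have ha1 : a ≤ 1 := by
    rw [ha]
    calc t ^ (-γ) ≤ t ^ (0:ℝ) :=
          Real.rpow_le_rpow_of_exponent_le ht (by linarith)
      _ = 1 := Real.rpow_zero t
  -- the cylinder set
  set A : Set (Fin K → ℝ) := Set.pi univ (Function.update (fun _ => Icc (0:ℝ) 1) i0 (Ioc 0 a))
  have hsub : A ⊆ {u | t ≤ ∑ i : Fin K, (u i) ^ (-(1/γ))} := by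
    intro u hu
    have hu0 : u i0 ∈ Ioc (0:ℝ) a := by
      have := hu i0 (mem_univ _); rwa [Function.update_self] at this
    have hterm : t ≤ (u i0) ^ (-(1/γ)) := by
      have hexp : -(1/γ) < 0 := by
        rw [neg_lt, neg_zero]; positivity
      have h1 : a ^ (-(1/γ)) ≤ (u i0) ^ (-(1/γ)) := by
        rw [Real.rpow_le_rpow_iff_of_neg ha0 hu0.1 hexp]
        exact hu0.2
      have h2 : a ^ (-(1/γ)) = t := by
        rw [ha, ← Real.rpow_mul (le_of_lt ht0)]
        have : -γ * -(1/γ) = 1 := by field_simp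
        rw [this, Real.rpow_one]
      linarith
    refine le_trans hterm ?_
    apply Finset.single_le_sum (f := fun i => (u i) ^ (-(1/γ))) ?_ (Finset.mem_univ i0)
    intro i _
    have hui : 0 ≤ u i := by
      have := hu i (mem_univ _)
      by_cases h : i = i0
      · subst h; rw [Function.update_self] at this; exact le_of_lt this.1
      · rw [Function.update_of_ne h] at this; exact this.1
    exact Real.rpow_nonneg hui _
  refine le_trans (le_of_eq ?_) (measure_mono hsub)
  rw [Measure.pi_pi]
  have : ∀ i : Fin K, (volume.restrict (Icc (0:ℝ) 1))
      (Function.update (fun _ => Icc (0:ℝ) 1) i0 (Ioc 0 a) i)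
      = if i = i0 then ENNReal.ofReal a else 1 := by
    intro i
    by_cases h : i = i0
    · subst h
      rw [Function.update_self, if_pos rfl, Measure.restrict_apply measurableSet_Ioc]
      rw [inter_eq_self_of_subset_left (Ioc_subset_Icc_self.trans (Icc_subset_Icc_right ha1))]
      simp [Real.volume_Ioc]
    · rw [Function.update_of_ne h, if_neg h, Measure.restrict_apply measurableSet_Icc,
        inter_self]
      simp [Real.volume_Icc]
  rw [Finset.prod_congr rfl (fun i _ => this i), Finset.prod_ite_eq' Finset.univ i0]
  simp

lemma pareto_pi_eval {K : ℕ} (j : Fin K) (s : Set ℝ) (hs : MeasurableSet s) :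
    (Measure.pi fun _ : Fin K => volume.restrict (Icc (0:ℝ) 1)) {u | u j ∈ s}
      = (volume.restrict (Icc (0:ℝ) 1)) s := by
  have : {u : Fin K → ℝ | u j ∈ s} = Set.pi univ (Function.update (fun _ => univ) j s) := by
    rw [← Set.eval_preimage]; rfl
  rw [this, Measure.pi_pi]
  have h : ∀ i : Fin K, (volume.restrict (Icc (0:ℝ) 1))
      (Function.update (fun _ => (univ : Set ℝ)) j s i)
      = if i = j then (volume.restrict (Icc (0:ℝ) 1)) s else 1 := by
    intro i
    by_cases h : i = j
    · subst h; rw [Function.update_self, if_pos rfl]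
    · rw [Function.update_of_ne h, if_neg h, Measure.restrict_apply_univ]
      simp [Real.volume_Icc]
  rw [Finset.prod_congr rfl (fun i _ => h i), Finset.prod_ite_eq' Finset.univ j]
  simp

lemma pareto_H_ub {K : ℕ} (hK : 1 ≤ K) {γ : ℝ} (hγ : 0 < γ) {t : ℝ} (ht : 0 < t) :
    (Measure.pi fun _ : Fin K => volume.restrict (Icc (0:ℝ) 1))
        {u | t ≤ ∑ i : Fin K, (u i) ^ (-(1/γ))}
      ≤ (K : ℝ≥0∞) * ENNReal.ofReal ((t/K) ^ (-γ)) := by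
  set π : Measure (Fin K → ℝ) := Measure.pi fun _ : Fin K => volume.restrict (Icc (0:ℝ) 1)
    with hπ
  have hK0 : (0:ℝ) < K := by exact_mod_cast hK
  set b : ℝ := (t/K) ^ (-γ) with hb
  have htK : (0:ℝ) < t/K := by positivity
  have hb0 : 0 < b := Real.rpow_pos_of_pos htK _
  have hexp : -(1/γ) < 0 := by rw [neg_lt, neg_zero]; positivity
  have hbe : b ^ (-(1/γ)) = t/K := by
    rw [hb, ← Real.rpow_mul (le_of_lt htK)]
    have : -γ * -(1/γ) = 1 := by field_simp
    rw [this, Real.rpow_one]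
  set box : Set (Fin K → ℝ) := {u | ∀ i, u i ∈ Icc (0:ℝ) 1} with hbox
  have hsub : {u : Fin K → ℝ | t ≤ ∑ i : Fin K, (u i) ^ (-(1/γ))}
      ⊆ (⋃ i : Fin K, {u : Fin K → ℝ | u i ∈ Ioc (0:ℝ) b}) ∪ boxᶜ := by
    intro u hu
    by_cases hub : u ∈ box
    · left
      have hne : (Finset.univ : Finset (Fin K)).Nonempty :=
        Finset.univ_nonempty_iff.mpr ⟨⟨0, hK⟩⟩
      have hex : ∃ i : Fin K, t/K ≤ (u i) ^ (-(1/γ)) := by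
        by_contra hcon
        push_neg at hcon
        have hlt : ∑ i : Fin K, (u i) ^ (-(1/γ)) < ∑ _i : Fin K, t/K :=
          Finset.sum_lt_sum_of_nonempty hne (fun i _ => hcon i)
        rw [Finset.sum_const, Finset.card_univ, Fintype.card_fin, nsmul_eq_mul] at hlt
        have h2 : (K:ℝ) * (t/K) = t := by field_simp
        rw [h2] at hlt
        exact absurd hu (by simpa using not_le.mpr hlt)
      obtain ⟨i, hi⟩ := hex
      refine mem_iUnion.mpr ⟨i, ?_⟩
      have hui0 : 0 < u i := by
        rcases lt_or_eq_of_le (hub i).1 with h | h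
        · exact h
        · exfalso
          rw [← h, Real.zero_rpow (ne_of_lt hexp)] at hi
          linarith
      have : u i ≤ b := by
        rw [← hbe] at hi
        exact (Real.rpow_le_rpow_iff_of_neg hb0 hui0 hexp).mp hi
      exact ⟨hui0, this⟩
    · right; exact hub
  have h1 : π (⋃ i : Fin K, {u : Fin K → ℝ | u i ∈ Ioc (0:ℝ) b})
      ≤ (K : ℝ≥0∞) * ENNReal.ofReal b := by
    calc π (⋃ i : Fin K, {u : Fin K → ℝ | u i ∈ Ioc (0:ℝ) b})
        ≤ ∑ i : Fin K, π {u : Fin K → ℝ | u i ∈ Ioc (0:ℝ) b} := measure_iUnion_fintype_le _ _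
      _ ≤ ∑ _i : Fin K, ENNReal.ofReal b := by
          apply Finset.sum_le_sum
          intro i _
          rw [hπ, pareto_pi_eval i _ measurableSet_Ioc,
            Measure.restrict_apply measurableSet_Ioc]
          calc volume (Ioc (0:ℝ) b ∩ Icc 0 1) ≤ volume (Ioc (0:ℝ) b) :=
                measure_mono inter_subset_left
            _ = ENNReal.ofReal b := by simp [Real.volume_Ioc]
      _ = (K : ℝ≥0∞) * ENNReal.ofReal b := by
          rw [Finset.sum_const, Finset.card_univ, Fintype.card_fin, nsmul_eq_mul]
  have h2 : π boxᶜ = 0 := by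
    have hb2 : boxᶜ ⊆ ⋃ i : Fin K, {u : Fin K → ℝ | u i ∈ (Icc (0:ℝ) 1)ᶜ} := by
      intro u hu
      rw [hbox] at hu
      simp only [mem_compl_iff, mem_setOf_eq, not_forall] at hu
      obtain ⟨i, hi⟩ := hu
      exact mem_iUnion.mpr ⟨i, hi⟩
    refine le_antisymm (le_trans (measure_mono hb2)
      (le_trans (measure_iUnion_fintype_le _ _) ?_)) zero_le
    apply le_of_eq
    apply Finset.sum_eq_zero
    intro i _
    rw [hπ, pareto_pi_eval i _ measurableSet_Icc.compl,
      Measure.restrict_apply measurableSet_Icc.compl]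
    simp
  calc π {u | t ≤ ∑ i : Fin K, (u i) ^ (-(1/γ))}
      ≤ π ((⋃ i : Fin K, {u : Fin K → ℝ | u i ∈ Ioc (0:ℝ) b}) ∪ boxᶜ) := measure_mono hsub
    _ ≤ π (⋃ i : Fin K, {u : Fin K → ℝ | u i ∈ Ioc (0:ℝ) b}) + π boxᶜ := measure_union_le _ _
    _ ≤ (K : ℝ≥0∞) * ENNReal.ofReal b + 0 := by rw [h2]; exact add_le_add h1 le_rfl
    _ = (K : ℝ≥0∞) * ENNReal.ofReal b := add_zero _

lemma pareto_sandwich {K : ℕ} (hK : 1 ≤ K) {γ : ℝ} (hγ : 0 < γ)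
    (H : ℝ → ℝ)
    (hH : ∀ t, H t = ((Measure.pi fun _ : Fin K => volume.restrict (Icc (0:ℝ) 1))
        {u | t ≤ ∑ i : Fin K, (u i) ^ (-(1/γ))}).toReal)
    (x : Fin K → ℝ) (hx : ∀ i, x i ∈ Ioo (0:ℝ) 1) (n : ℕ) (hn : 1 ≤ n)
    (hne : (Finset.univ : Finset (Fin K)).Nonempty) :
    Finset.univ.sup' hne (fun i => -(2/(n:ℝ)) * Real.log (x i)) - (2/(n:ℝ))*(1+γ)*Real.log K
      ≤ -(2/(n:ℝ)) * Real.log (H (∑ i : Fin K, (x i) ^ (-(1/γ)))) ∧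
    -(2/(n:ℝ)) * Real.log (H (∑ i : Fin K, (x i) ^ (-(1/γ))))
      ≤ Finset.univ.sup' hne (fun i => -(2/(n:ℝ)) * Real.log (x i)) + (2/(n:ℝ))*γ*Real.log K := by
  have hK0 : (0:ℝ) < K := by exact_mod_cast hK
  have hnpos : (0:ℝ) < n := by exact_mod_cast hn
  have h2n : (0:ℝ) < 2/(n:ℝ) := by positivity
  have hexp : -(1/γ) < 0 := by rw [neg_lt, neg_zero]; positivity
  set t : ℝ := ∑ i : Fin K, (x i) ^ (-(1/γ)) with htdef
  have hterm1 : ∀ i, 1 ≤ (x i) ^ (-(1/γ)) := by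
    intro i
    have := Real.rpow_le_rpow_of_exponent_ge (hx i).1 (le_of_lt (hx i).2) (le_of_lt hexp)
    rwa [Real.rpow_zero] at this
  have ht1 : 1 ≤ t := by
    have i0 : Fin K := ⟨0, hK⟩
    refine le_trans (hterm1 i0) ?_
    exact Finset.single_le_sum (fun i _ => le_trans zero_le_one (hterm1 i)) (Finset.mem_univ i0)
  have ht0 : (0:ℝ) < t := lt_of_lt_of_le one_pos ht1
  have htK : (0:ℝ) < t/K := by positivity
  set π : Measure (Fin K → ℝ) := Measure.pi fun _ : Fin K => volume.restrict (Icc (0:ℝ) 1)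
    with hπ
  have hπuniv : π univ = 1 := by
    rw [hπ, Measure.pi_univ]
    have : ∀ _i : Fin K, (volume.restrict (Icc (0:ℝ) 1)) univ = 1 := by
      intro i
      rw [Measure.restrict_apply_univ]
      simp [Real.volume_Icc]
    simp [this]
  have hfin : π {u | t ≤ ∑ i : Fin K, (u i) ^ (-(1/γ))} ≠ ⊤ := by
    refine ne_top_of_le_ne_top ?_ (measure_mono (subset_univ _))
    rw [hπuniv]; exact ENNReal.one_ne_top
  -- real lower bound on H t
  have hHlb : t ^ (-γ) ≤ H t := by
    rw [hH]
    have := pareto_H_lb hK hγ ht1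
    have h2 := ENNReal.toReal_mono hfin this
    rwa [ENNReal.toReal_ofReal (le_of_lt (Real.rpow_pos_of_pos ht0 _))] at h2
  have hHub : H t ≤ (K:ℝ) * (t/K) ^ (-γ) := by
    rw [hH]
    have := pareto_H_ub hK hγ ht0 (K := K)
    have h2 := ENNReal.toReal_mono (by finiteness) this
    rwa [ENNReal.toReal_mul, ENNReal.toReal_natCast,
      ENNReal.toReal_ofReal (le_of_lt (Real.rpow_pos_of_pos htK _))] at h2
  have hHpos : 0 < H t := lt_of_lt_of_le (Real.rpow_pos_of_pos ht0 _) hHlb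
  have hloglb : -γ * Real.log t ≤ Real.log (H t) := by
    have := Real.log_le_log (Real.rpow_pos_of_pos ht0 _) hHlb
    rwa [Real.log_rpow ht0] at this
  have hlogub : Real.log (H t) ≤ (1+γ) * Real.log K - γ * Real.log t := by
    have h1 := Real.log_le_log hHpos hHub
    rw [Real.log_mul (ne_of_gt hK0) (ne_of_gt (Real.rpow_pos_of_pos htK _)),
      Real.log_rpow htK, Real.log_div (ne_of_gt ht0) (ne_of_gt hK0)] at h1
    nlinarith [h1]
  set s : ℝ := Finset.univ.sup' hne (fun i => -(2/(n:ℝ)) * Real.log (x i)) with hs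
  -- s ≤ (2γ/n) log t
  have hslb : s ≤ (2/(n:ℝ)) * γ * Real.log t := by
    rw [hs]
    apply Finset.sup'_le
    intro i _
    have hxe : (x i) ^ (-(1/γ)) ≤ t :=
      Finset.single_le_sum (fun j _ => le_trans zero_le_one (hterm1 j)) (Finset.mem_univ i)
    have hlog := Real.log_le_log (Real.rpow_pos_of_pos (hx i).1 _) hxe
    rw [Real.log_rpow (hx i).1] at hlog
    -- -(1/γ) * log x i ≤ log t
    have := mul_le_mul_of_nonneg_left hlog (le_of_lt (by positivity : (0:ℝ) < 2/(n:ℝ) * γ))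
    calc -(2/(n:ℝ)) * Real.log (x i) = (2/(n:ℝ) * γ) * (-(1/γ) * Real.log (x i)) := by
          field_simp
      _ ≤ (2/(n:ℝ) * γ) * Real.log t := this
      _ = (2/(n:ℝ)) * γ * Real.log t := by ring
  -- (2γ/n) log t ≤ s + (2γ/n) log K
  have hsub2 : (2/(n:ℝ)) * γ * Real.log t ≤ s + (2/(n:ℝ)) * γ * Real.log K := by
    set m : ℝ := (n:ℝ)/2 * s with hm
    have hxm : ∀ i, (x i) ^ (-(1/γ)) ≤ Real.exp (m/γ) := by
      intro i
      have h1 : -(2/(n:ℝ)) * Real.log (x i) ≤ s :=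
        Finset.le_sup' (fun j => -(2/(n:ℝ)) * Real.log (x j)) (Finset.mem_univ i)
      have h2 : -Real.log (x i) ≤ m := by
        rw [hm]
        have := mul_le_mul_of_nonneg_left h1 (le_of_lt (by positivity : (0:ℝ) < (n:ℝ)/2))
        calc -Real.log (x i) = (n:ℝ)/2 * (-(2/(n:ℝ)) * Real.log (x i)) := by
              field_simp
          _ ≤ (n:ℝ)/2 * s := this
      rw [Real.rpow_def_of_pos (hx i).1, Real.exp_le_exp]
      calc Real.log (x i) * -(1/γ) = -Real.log (x i) * (1/γ) := by ring
        _ ≤ m * (1/γ) := by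
            apply mul_le_mul_of_nonneg_right h2; positivity
        _ = m/γ := by ring
    have htub : t ≤ (K:ℝ) * Real.exp (m/γ) := by
      calc t = ∑ i : Fin K, (x i) ^ (-(1/γ)) := htdef
        _ ≤ ∑ _i : Fin K, Real.exp (m/γ) := Finset.sum_le_sum (fun i _ => hxm i)
        _ = (K:ℝ) * Real.exp (m/γ) := by
            rw [Finset.sum_const, Finset.card_univ, Fintype.card_fin, nsmul_eq_mul]
    have hlogt : Real.log t ≤ Real.log K + m/γ := by
      have := Real.log_le_log ht0 htub
      rwa [Real.log_mul (ne_of_gt hK0) (ne_of_gt (Real.exp_pos _)), Real.log_exp] at this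
    have := mul_le_mul_of_nonneg_left hlogt (le_of_lt (by positivity : (0:ℝ) < 2/(n:ℝ) * γ))
    have hmeq : (2/(n:ℝ) * γ) * (m/γ) = s := by
      rw [hm]; field_simp
    nlinarith [this, hmeq]
  have key1 : -(2/(n:ℝ)) * ((1+γ) * Real.log K - γ * Real.log t)
      ≤ -(2/(n:ℝ)) * Real.log (H t) := by
    apply mul_le_mul_of_nonpos_left hlogub (by linarith : -(2/(n:ℝ)) ≤ 0)
  have key2 : -(2/(n:ℝ)) * Real.log (H t) ≤ -(2/(n:ℝ)) * (-γ * Real.log t) := by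
    apply mul_le_mul_of_nonpos_left hloglb (by linarith : -(2/(n:ℝ)) ≤ 0)
  have e1 : -(2/(n:ℝ)) * ((1+γ) * Real.log K - γ * Real.log t)
      = (2/(n:ℝ)) * γ * Real.log t - (2/(n:ℝ))*(1+γ)*Real.log K := by ring
  have e2 : -(2/(n:ℝ)) * (-γ * Real.log t) = (2/(n:ℝ)) * γ * Real.log t := by ring
  constructor
  · rw [e1] at key1; linarith
  · rw [e2] at key2; linarith

/-- The Pareto combination test has exact slope `max_{i ≤ ℓ} λ i * c i`; in particular,
when `ℓ ≥ 2` it is not asymptotically Bahadur optimal since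
`max_{i ≤ ℓ} λ i c i < ∑ λ i c i`. -/
theorem pareto_combination_exact_slope
    {K : ℕ} (hK : 1 ≤ K) (ℓ : ℕ) (hℓ : 1 ≤ ℓ) (hℓK : ℓ ≤ K) (γ : ℝ) (hγ : 0 < γ)
    (lam c : Fin K → ℝ)
    (hlam : ∀ i, 0 < lam i)
    (hcpos : ∀ i : Fin K, (i : ℕ) < ℓ → 0 < c i)
    (hcnull : ∀ i : Fin K, ℓ ≤ (i : ℕ) → c i = 0)
    (nseq : Fin K → ℕ → ℕ)
    (hn : ∀ i, Tendsto (fun n : ℕ => (nseq i n : ℝ) / (n : ℝ)) atTop (nhds (lam i)))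
    {Ω : Type*} [MeasurableSpace Ω] (μ : Measure Ω) [IsProbabilityMeasure μ]
    (p : ℕ → Fin K → Ω → ℝ)
    (hmeas : ∀ n i, Measurable (p n i))
    (hval : ∀ n i ω, p n i ω ∈ Ioo (0 : ℝ) 1)
    (hslope : ∀ i : Fin K, (i : ℕ) < ℓ →
      ∀ᵐ ω ∂μ, Tendsto (fun n : ℕ => -(2 / (nseq i n : ℝ)) * Real.log (p n i ω))
        atTop (nhds (c i)))
    (hnull : ∀ i : Fin K, ℓ ≤ (i : ℕ) →
      ∀ n, Measure.map (p n i) μ = volume.restrict (Ioo (0 : ℝ) 1))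
    -- the Pareto combination statistic, its null survival function and its p-value
    (T : (Fin K → ℝ) → ℝ)
    (hT : ∀ u : Fin K → ℝ, T u = ∑ i : Fin K, (u i) ^ (-(1 / γ)))
    (H : ℝ → ℝ)
    (hH : ∀ t, H t =
      ((Measure.pi fun _ : Fin K => volume.restrict (Icc (0 : ℝ) 1))
        {u | t ≤ T u}).toReal)
    (q : ℕ → Ω → ℝ)
    (hq : ∀ n ω, q n ω = H (T (fun i => p n i ω))) :
    (∀ᵐ ω ∂μ, Tendsto (fun n : ℕ => -(2 / (n : ℝ)) * Real.log (q n ω))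
      atTop (nhds (⨆ i : Fin ℓ, lam (Fin.castLE hℓK i) * c (Fin.castLE hℓK i)))) ∧
    (2 ≤ ℓ →
      (⨆ i : Fin ℓ, lam (Fin.castLE hℓK i) * c (Fin.castLE hℓK i)) <
        ∑ i : Fin K, lam i * c i) := by
  haveI : NeZero K := ⟨Nat.one_le_iff_ne_zero.mp hK⟩
  haveI hneFℓ : Nonempty (Fin ℓ) := ⟨⟨0, hℓ⟩⟩
  have hne : (Finset.univ : Finset (Fin K)).Nonempty := ⟨⟨0, hK⟩, Finset.mem_univ _⟩
  have hneℓ : (Finset.univ : Finset (Fin ℓ)).Nonempty := ⟨⟨0, hℓ⟩, Finset.mem_univ _⟩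
  set L : Fin K → ℝ := fun i => lam i * c i with hL
  have hLnonneg : ∀ i, 0 ≤ L i := by
    intro i
    rcases lt_or_ge (i : ℕ) ℓ with h | h
    · exact le_of_lt (mul_pos (hlam i) (hcpos i h))
    · simp [hL, hcnull i h]
  -- identification of the sup
  have hSup_eq : Finset.univ.sup' hne L
      = ⨆ i : Fin ℓ, lam (Fin.castLE hℓK i) * c (Fin.castLE hℓK i) := by
    rw [← Finset.sup'_univ_eq_ciSup]
    apply le_antisymm
    · apply Finset.sup'_le
      intro i _
      rcases lt_or_ge (i : ℕ) ℓ with h | h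
      · have hcast : Fin.castLE hℓK (⟨(i : ℕ), h⟩ : Fin ℓ) = i := by
          apply Fin.ext; rfl
        have : L i = lam (Fin.castLE hℓK (⟨(i : ℕ), h⟩ : Fin ℓ))
            * c (Fin.castLE hℓK (⟨(i : ℕ), h⟩ : Fin ℓ)) := by rw [hcast]
        rw [this]
        exact Finset.le_sup' (fun j : Fin ℓ => lam (Fin.castLE hℓK j) * c (Fin.castLE hℓK j))
          (Finset.mem_univ _)
      · have : L i = 0 := by simp [hL, hcnull i h]
        rw [this]
        refine le_trans ?_ (Finset.le_sup'
          (fun j : Fin ℓ => lam (Fin.castLE hℓK j) * c (Fin.castLE hℓK j))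
          (Finset.mem_univ (⟨0, hℓ⟩ : Fin ℓ)))
        exact le_of_lt (mul_pos (hlam _) (hcpos _ hℓ))
    · apply Finset.sup'_le
      intro j _
      exact Finset.le_sup' L (Finset.mem_univ (Fin.castLE hℓK j))
  -- per-index a.s. convergence
  have hconv : ∀ i : Fin K, ∀ᵐ ω ∂μ,
      Tendsto (fun n : ℕ => -(2/(n:ℝ)) * Real.log (p n i ω)) atTop (nhds (L i)) := by
    intro i
    rcases lt_or_ge (i : ℕ) ℓ with h | h
    · filter_upwards [hslope i h] with ω hω
      have hmul := (hn i).mul hω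
      apply hmul.congr'
      have hev : ∀ᶠ n : ℕ in atTop, (0:ℝ) < (nseq i n : ℝ) := by
        have h1 := (hn i).eventually (eventually_gt_nhds (by linarith [hlam i] : lam i / 2 < lam i))
        filter_upwards [h1, eventually_ge_atTop 1] with n hn1 hn2
        by_contra hcon
        push_neg at hcon
        have : (nseq i n : ℝ) = 0 := le_antisymm hcon (Nat.cast_nonneg _)
        rw [this] at hn1
        have hnpos : (0:ℝ) < n := by exact_mod_cast hn2
        simp only [zero_div] at hn1
        linarith [hlam i]
      filter_upwards [hev, eventually_ge_atTop 1] with n hn0 hn1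
      have hnpos : (0:ℝ) < n := by exact_mod_cast hn1
      field_simp
    · have hnl := null_log_tendsto μ (fun n => p n i) (fun n => hmeas n i)
        (fun n ω => hval n i ω) (fun n => hnull i h n)
      have hLi : L i = 0 := by simp [hL, hcnull i h]
      rw [hLi]
      exact hnl
  have hconv' : ∀ᵐ ω ∂μ, ∀ i : Fin K,
      Tendsto (fun n : ℕ => -(2/(n:ℝ)) * Real.log (p n i ω)) atTop (nhds (L i)) :=
    ae_all_iff.mpr hconv
  have hHsum : ∀ t, H t = ((Measure.pi fun _ : Fin K => volume.restrict (Icc (0:ℝ) 1))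
      {u | t ≤ ∑ i : Fin K, (u i) ^ (-(1/γ))}).toReal := by
    intro t
    have hset : {u : Fin K → ℝ | t ≤ T u} = {u | t ≤ ∑ i : Fin K, (u i) ^ (-(1/γ))} := by
      ext u
      simp only [mem_setOf_eq, hT]
    rw [hH t, hset]
  constructor
  · filter_upwards [hconv'] with ω hω
    have hs : Tendsto (fun n : ℕ => Finset.univ.sup' hne
          (fun i => -(2/(n:ℝ)) * Real.log (p n i ω))) atTop
        (nhds (Finset.univ.sup' hne L)) :=
      Tendsto.finset_sup'_nhds_apply hne (fun i _ => hω i)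
    rw [← hSup_eq]
    have herr1 : Tendsto (fun n : ℕ => (2/(n:ℝ))*(1+γ)*Real.log K) atTop (nhds 0) := by
      have := tendsto_const_div_atTop_nhds_zero_nat (2*(1+γ)*Real.log K)
      apply this.congr
      intro n
      ring
    have herr2 : Tendsto (fun n : ℕ => (2/(n:ℝ))*γ*Real.log K) atTop (nhds 0) := by
      have := tendsto_const_div_atTop_nhds_zero_nat (2*γ*Real.log K)
      apply this.congr
      intro n
      ring
    have hlowten : Tendsto (fun n : ℕ => Finset.univ.sup' hne
          (fun i => -(2/(n:ℝ)) * Real.log (p n i ω)) - (2/(n:ℝ))*(1+γ)*Real.log K) atTop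
        (nhds (Finset.univ.sup' hne L)) := by
      have := hs.sub herr1
      rwa [sub_zero] at this
    have hupten : Tendsto (fun n : ℕ => Finset.univ.sup' hne
          (fun i => -(2/(n:ℝ)) * Real.log (p n i ω)) + (2/(n:ℝ))*γ*Real.log K) atTop
        (nhds (Finset.univ.sup' hne L)) := by
      have := hs.add herr2
      rwa [add_zero] at this
    refine tendsto_of_tendsto_of_tendsto_of_le_of_le' hlowten hupten ?_ ?_
    · filter_upwards [eventually_ge_atTop 1] with n hn1
      have hsand := pareto_sandwich hK hγ H hHsum (fun i => p n i ω)
        (fun i => hval n i ω) n hn1 hne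
      have hqe : -(2/(n:ℝ)) * Real.log (q n ω)
          = -(2/(n:ℝ)) * Real.log (H (∑ i : Fin K, (p n i ω) ^ (-(1/γ)))) := by
        rw [hq n ω, hT]
      rw [hqe]
      exact hsand.1
    · filter_upwards [eventually_ge_atTop 1] with n hn1
      have hsand := pareto_sandwich hK hγ H hHsum (fun i => p n i ω)
        (fun i => hval n i ω) n hn1 hne
      have hqe : -(2/(n:ℝ)) * Real.log (q n ω)
          = -(2/(n:ℝ)) * Real.log (H (∑ i : Fin K, (p n i ω) ^ (-(1/γ)))) := by
        rw [hq n ω, hT]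
      rw [hqe]
      exact hsand.2
  · intro h2ℓ
    obtain ⟨j, _, hj⟩ := Finset.exists_mem_eq_sup' hneℓ
      (fun j : Fin ℓ => lam (Fin.castLE hℓK j) * c (Fin.castLE hℓK j))
    rw [← Finset.sup'_univ_eq_ciSup, hj]
    set j' : Fin ℓ := if j = ⟨0, hℓ⟩ then ⟨1, h2ℓ⟩ else ⟨0, hℓ⟩ with hj'
    have hjj' : j' ≠ j := by
      rcases eq_or_ne j ⟨0, hℓ⟩ with h | h
      · rw [hj', if_pos h, h]
        simp [Fin.ext_iff]
      · rw [hj', if_neg h]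
        exact fun hcon => h hcon.symm
    have hcastne : Fin.castLE hℓK j' ≠ Fin.castLE hℓK j := by
      intro hcon
      apply hjj'
      apply Fin.ext
      simpa using congrArg Fin.val hcon
    have hj'lt : ((Fin.castLE hℓK j' : Fin K) : ℕ) < ℓ := by
      simpa using j'.isLt
    exact Finset.single_lt_sum hcastne (Finset.mem_univ _) (Finset.mem_univ _)
      (mul_pos (hlam _) (hcpos _ hj'lt)) (fun k _ _ => hLnonneg k)
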